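/- Let M be a class of star bodies in ℝⁿ containing K₁ and L₁, let K₂,...,Kₙ be star bodies, and let φ : (0,∞) → (0,∞) be strictly convex and strictly decreasing. If Ṽ_φ(Q, K₁, K₂,...,Kₙ) = Ṽ_φ(Q, L₁, K₂,...,Kₙ) for all Q ∈ M, then K₁ = L₁ (their radial functions agree). -/

import Mathlib

open MeasureTheory Metric Set Finset

/-- The surface (spherical) measure on the unit sphere `S^{n-1} ⊆ ℝⁿ`. -/
noncomputable def sphereσ (n : ℕ) : Measure (sphere (0 : EuclideanSpace ℝ (Fin n)) 1) :=
  μH[(n : ℝ) - 1]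

/-- The Orlicz multiple dual mixed volume of `(Q, M, K₂, ..., Kₙ)`, where
`K₂,...,Kₙ` have radial functions `ρ 2, ..., ρ n`. -/
noncomputable def VOrlicz (n : ℕ) (φ : ℝ → ℝ)
    (Q M : sphere (0 : EuclideanSpace ℝ (Fin n)) 1 → ℝ)
    (ρ : ℕ → (sphere (0 : EuclideanSpace ℝ (Fin n)) 1 → ℝ)) : ℝ :=
  (1 / n) * ∫ u, φ (M u / Q u) * (Q u * ∏ j ∈ Finset.Icc 2 n, ρ j u) ∂(sphereσ n)

open scoped ENNReal NNReal

set_option linter.unnecessarySimpa false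
set_option linter.unusedVariables false

-- coordinate bound
lemma abs_coord_le_norm {k : ℕ} (x : EuclideanSpace ℝ (Fin k)) (i : Fin k) : |x i| ≤ ‖x‖ := by
  rw [EuclideanSpace.norm_eq]
  have h1 : |x i| = Real.sqrt (‖x i‖ ^ 2) := by
    rw [Real.sqrt_sq_eq_abs, Real.norm_eq_abs, abs_abs]
  rw [h1]
  exact Real.sqrt_le_sqrt (Finset.single_le_sum (f := fun j => ‖x j‖ ^ 2) (fun j _ => sq_nonneg _) (Finset.mem_univ i))

-- lipschitz of equiv.symm
lemma lipschitz_equiv_symm (k : ℕ) :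
    LipschitzWith ((Fintype.card (Fin k) : NNReal) ^ ((1 : ℝ≥0∞) / 2).toReal)
      ((WithLp.equiv 2 (Fin k → ℝ)).symm) := by
  apply LipschitzWith.of_dist_le_mul
  intro x y
  have := (PiLp.antilipschitzWith_ofLp 2 (fun _ : Fin k => ℝ)).le_mul_dist
    ((WithLp.equiv 2 (Fin k → ℝ)).symm x) ((WithLp.equiv 2 (Fin k → ℝ)).symm y)
  simpa using this

-- normalization lipschitz
lemma lipschitzOnWith_normalize {E : Type*} [NormedAddCommGroup E] [NormedSpace ℝ E] :
    LipschitzOnWith 2 (fun x : E => ‖x‖⁻¹ • x) {x : E | 1 ≤ ‖x‖} := by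
  apply LipschitzOnWith.of_dist_le_mul
  intro x hx y hy
  simp only [Set.mem_setOf_eq] at hx hy
  have hx0 : (0:ℝ) < ‖x‖ := lt_of_lt_of_le one_pos hx
  have hy0 : (0:ℝ) < ‖y‖ := lt_of_lt_of_le one_pos hy
  rw [dist_eq_norm, dist_eq_norm]
  have key : ‖x‖⁻¹ • x - ‖y‖⁻¹ • y = ‖x‖⁻¹ • (x - y) + (‖x‖⁻¹ - ‖y‖⁻¹) • y := by
    rw [smul_sub, sub_smul]; abel
  rw [key]
  have h1 : ‖‖x‖⁻¹ • (x - y)‖ ≤ ‖x - y‖ := by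
    rw [norm_smul, Real.norm_eq_abs, abs_of_pos (inv_pos.mpr hx0)]
    calc ‖x‖⁻¹ * ‖x - y‖ ≤ 1 * ‖x - y‖ := by
          apply mul_le_mul_of_nonneg_right _ (norm_nonneg _)
          exact inv_le_one_of_one_le₀ hx
      _ = ‖x - y‖ := one_mul _
  have h2 : ‖(‖x‖⁻¹ - ‖y‖⁻¹) • y‖ ≤ ‖x - y‖ := by
    rw [norm_smul, Real.norm_eq_abs]
    have hdiff : ‖x‖⁻¹ - ‖y‖⁻¹ = (‖y‖ - ‖x‖) / (‖x‖ * ‖y‖) := by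
      field_simp
    have habs : |‖x‖⁻¹ - ‖y‖⁻¹| = |‖y‖ - ‖x‖| / (‖x‖ * ‖y‖) := by
      rw [hdiff, abs_div, abs_of_pos (mul_pos hx0 hy0)]
    have hmul : |‖y‖ - ‖x‖| / (‖x‖ * ‖y‖) * ‖y‖ = |‖y‖ - ‖x‖| / ‖x‖ := by
      field_simp
    rw [habs, hmul]
    calc |‖y‖ - ‖x‖| / ‖x‖ ≤ |‖y‖ - ‖x‖| := div_le_self (abs_nonneg _) hx
      _ ≤ ‖y - x‖ := abs_norm_sub_norm_le y x
      _ = ‖x - y‖ := norm_sub_rev y x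
  calc ‖‖x‖⁻¹ • (x - y) + (‖x‖⁻¹ - ‖y‖⁻¹) • y‖
      ≤ ‖‖x‖⁻¹ • (x - y)‖ + ‖(‖x‖⁻¹ - ‖y‖⁻¹) • y‖ := norm_add_le _ _
    _ ≤ ‖x - y‖ + ‖x - y‖ := add_le_add h1 h2
    _ = 2 * ‖x - y‖ := by ring

lemma insertNth_lipschitz {m : ℕ} (i : Fin (m+1)) (σ : ℝ) :
    LipschitzWith 1 (fun y : Fin m → ℝ => (i.insertNth σ y : Fin (m+1) → ℝ)) := by
  apply LipschitzWith.of_dist_le_mul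
  intro y y'
  rw [NNReal.coe_one, one_mul, dist_pi_le_iff dist_nonneg]
  intro k
  by_cases hk : k = i
  · subst hk
    simp [Fin.insertNth_apply_same, dist_nonneg]
  · obtain ⟨j, rfl⟩ := Fin.exists_succAbove_eq hk
    simp only [Fin.insertNth_apply_succAbove]
    exact dist_le_pi_dist y y' j

lemma sphere_hausdorff_lt_top (m : ℕ) :
    μH[(m : ℝ)] (univ : Set (sphere (0 : EuclideanSpace ℝ (Fin (m+1))) 1)) < ⊤ := by
  have hd : (0:ℝ) ≤ (m:ℝ) := Nat.cast_nonneg m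
  have hiso : Isometry ((↑) : sphere (0 : EuclideanSpace ℝ (Fin (m+1))) 1 →
      EuclideanSpace ℝ (Fin (m+1))) := isometry_subtype_coe
  rw [← Isometry.hausdorffMeasure_image hiso (Or.inl hd), Set.image_univ, Subtype.range_coe]
  set E := EuclideanSpace ℝ (Fin (m+1))
  set N : E → E := fun x => ‖x‖⁻¹ • x with hN
  set F : Fin (m+1) → Bool → (Fin m → ℝ) → E := fun i b y =>
    (WithLp.equiv 2 (Fin (m+1) → ℝ)).symm (i.insertNth (if b then (1:ℝ) else -1) y) with hF
  set B : Set (Fin m → ℝ) := Metric.closedBall 0 1 with hB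
  have hμpi : (μH[(m:ℝ)] : Measure (Fin m → ℝ)) = volume := by
    simpa using (hausdorffMeasure_pi_real (ι := Fin m))
  have hBfin : μH[(m:ℝ)] B < ⊤ := by
    rw [hμpi]
    exact (isCompact_closedBall _ _).measure_lt_top
  have hFlip : ∀ (i : Fin (m+1)) (b : Bool),
      LipschitzWith ((Fintype.card (Fin (m+1)) : NNReal) ^ ((1 : ℝ≥0∞) / 2).toReal * 1)
        (F i b) := fun i b =>
    (lipschitz_equiv_symm (m+1)).comp (insertNth_lipschitz i (if b then (1:ℝ) else -1))
  have hFsub : ∀ (i : Fin (m+1)) (b : Bool), F i b '' B ⊆ {x : E | 1 ≤ ‖x‖} := by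
    intro i b y hy
    obtain ⟨z, _, rfl⟩ := hy
    have h1 : |(F i b z) i| = 1 := by
      simp only [hF, WithLp.equiv_symm_apply, PiLp.toLp_apply, Fin.insertNth_apply_same]
      cases b <;> norm_num
    calc (1:ℝ) = |(F i b z) i| := h1.symm
      _ ≤ ‖F i b z‖ := abs_coord_le_norm _ _
  have hterm : ∀ p : Fin (m+1) × Bool, μH[(m:ℝ)] (N '' (F p.1 p.2 '' B)) < ⊤ := by
    intro ⟨i, b⟩
    have hNon : LipschitzOnWith 2 N (F i b '' B) :=
      lipschitzOnWith_normalize.mono (hFsub i b)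
    calc μH[(m:ℝ)] (N '' (F i b '' B)) ≤ (2:ℝ≥0∞) ^ (m:ℝ) * μH[(m:ℝ)] (F i b '' B) := by
          simpa using hNon.hausdorffMeasure_image_le hd
      _ ≤ (2:ℝ≥0∞) ^ (m:ℝ) *
          ((((Fintype.card (Fin (m+1)) : NNReal) ^ ((1 : ℝ≥0∞) / 2).toReal * 1 : ℝ≥0) : ℝ≥0∞) ^ (m:ℝ)
            * μH[(m:ℝ)] B) := by
          gcongr
          exact (hFlip i b).hausdorffMeasure_image_le hd B
      _ < ⊤ := by
          apply ENNReal.mul_lt_top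
          · exact ENNReal.rpow_lt_top_of_nonneg hd (by norm_num)
          apply ENNReal.mul_lt_top _ hBfin
          exact ENNReal.rpow_lt_top_of_nonneg hd (by simp)
  have hcover : (sphere (0:E) 1 : Set E) ⊆ ⋃ p : Fin (m+1) × Bool, N '' (F p.1 p.2 '' B) := by
    intro x hx
    have hxn : ‖x‖ = 1 := by simpa using hx
    obtain ⟨i, -, hi⟩ := Finset.exists_max_image (Finset.univ : Finset (Fin (m+1)))
      (fun k => |x k|) ⟨0, Finset.mem_univ 0⟩
    set Mx : ℝ := |x i| with hMx
    have hM : 0 < Mx := by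
      rcases lt_or_ge 0 Mx with h | h
      · exact h
      · exfalso
        have hx0 : ∀ k, x k = 0 := by
          intro k
          have := hi k (Finset.mem_univ k)
          have : |x k| ≤ 0 := le_trans this h
          exact abs_eq_zero.mp (le_antisymm this (abs_nonneg _))
        have : ‖x‖ = 0 := by
          rw [EuclideanSpace.norm_eq]
          simp [hx0]
        rw [hxn] at this; norm_num at this
    set b : Bool := decide (0 < x i) with hb
    have hσ : (if b then (1:ℝ) else -1) * Mx = x i := by
      rcases lt_or_ge 0 (x i) with h | h
      · have hb' : b = true := by simp [hb, h]
        rw [hb']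
        have h1 : (if (true:Bool) then (1:ℝ) else -1) = 1 := rfl
        rw [h1, hMx, abs_of_pos h, one_mul]
      · have hb' : b = false := by simp [hb, not_lt.mpr h]
        rw [hb']
        have h1 : (if (false:Bool) then (1:ℝ) else -1) = -1 := rfl
        rw [h1, hMx, abs_of_nonpos h]
        ring
    set y : Fin m → ℝ := fun j => x (i.succAbove j) / Mx with hy
    have hyB : y ∈ B := by
      rw [hB, Metric.mem_closedBall, dist_pi_le_iff zero_le_one]
      intro j
      rw [Real.dist_eq, hy]
      simp only [Pi.zero_apply, sub_zero, abs_div, abs_of_pos hM]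
      rw [div_le_one hM]
      exact hi _ (Finset.mem_univ _)
    have hFy : F i b y = Mx⁻¹ • x := by
      ext k
      simp only [hF, WithLp.equiv_symm_apply, PiLp.toLp_apply]
      by_cases hk : k = i
      · subst hk
        rw [Fin.insertNth_apply_same]
        have : (Mx⁻¹ • x) k = Mx⁻¹ * x k := rfl
        rw [this, ← hσ]
        field_simp
      · obtain ⟨j, rfl⟩ := Fin.exists_succAbove_eq hk
        rw [Fin.insertNth_apply_succAbove]
        have : (Mx⁻¹ • x) (i.succAbove j) = Mx⁻¹ * x (i.succAbove j) := rfl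
        rw [this, hy]
        field_simp
    refine Set.mem_iUnion.mpr ⟨⟨i, b⟩, ?_⟩
    refine ⟨Mx⁻¹ • x, ⟨y, hyB, hFy⟩, ?_⟩
    have hnorm : ‖Mx⁻¹ • x‖ = Mx⁻¹ := by
      rw [norm_smul, Real.norm_eq_abs, abs_of_pos (inv_pos.mpr hM), hxn, mul_one]
    rw [hN]
    simp only [hnorm, inv_inv, smul_smul]
    rw [mul_inv_cancel₀ hM.ne', one_smul]
  calc μH[(m:ℝ)] (sphere (0:E) 1 : Set E)
      ≤ μH[(m:ℝ)] (⋃ p : Fin (m+1) × Bool, N '' (F p.1 p.2 '' B)) := measure_mono hcover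
    _ ≤ ∑' p : Fin (m+1) × Bool, μH[(m:ℝ)] (N '' (F p.1 p.2 '' B)) := measure_iUnion_le _
    _ < ⊤ := by
        rw [tsum_fintype]
        exact ENNReal.sum_lt_top.mpr fun p _ => hterm p

lemma sphere_hausdorff_open_pos (m : ℕ)
    (U : Set (sphere (0 : EuclideanSpace ℝ (Fin (m+1))) 1))
    (hU : IsOpen U) (hne : U.Nonempty) : 0 < μH[(m : ℝ)] U := by
  have hd : (0:ℝ) ≤ (m:ℝ) := Nat.cast_nonneg m
  have hiso : Isometry ((↑) : sphere (0 : EuclideanSpace ℝ (Fin (m+1))) 1 →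
      EuclideanSpace ℝ (Fin (m+1))) := isometry_subtype_coe
  rw [← Isometry.hausdorffMeasure_image hiso (Or.inl hd)]
  set E := EuclideanSpace ℝ (Fin (m+1))
  obtain ⟨u₀, hu₀⟩ := hne
  set x₀ : E := (u₀ : E) with hx₀
  have hxn : ‖x₀‖ = 1 := by
    have := u₀.2
    simpa [hx₀] using this
  have hsum1 : ∑ k, (x₀ k) ^ 2 = 1 := by
    have h := hxn
    rw [EuclideanSpace.norm_eq] at h
    have h2 : ∑ k, ‖x₀ k‖ ^ 2 = 1 := by
      have hnn : 0 ≤ ∑ k, ‖x₀ k‖ ^ 2 := Finset.sum_nonneg fun k _ => sq_nonneg _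
      calc ∑ k, ‖x₀ k‖ ^ 2 = (Real.sqrt (∑ k, ‖x₀ k‖ ^ 2)) ^ 2 := (Real.sq_sqrt hnn).symm
        _ = 1 := by rw [h]; norm_num
    simpa [Real.norm_eq_abs, sq_abs] using h2
  obtain ⟨i, hi⟩ : ∃ i, x₀ i ≠ 0 := by
    by_contra h
    push_neg at h
    have : ‖x₀‖ = 0 := by rw [EuclideanSpace.norm_eq]; simp [h]
    rw [hxn] at this; norm_num at this
  set σ : ℝ := if 0 < x₀ i then 1 else -1 with hσdef
  have hσabs : σ * |x₀ i| = x₀ i := by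
    rcases lt_or_ge 0 (x₀ i) with h | h
    · rw [hσdef, if_pos h, abs_of_pos h, one_mul]
    · rw [hσdef, if_neg (not_lt.mpr h), abs_of_nonpos h]; ring
  have hσsq : σ ^ 2 = 1 := by
    rcases lt_or_ge 0 (x₀ i) with h | h
    · rw [hσdef, if_pos h]; norm_num
    · rw [hσdef, if_neg (not_lt.mpr h)]; norm_num
  -- the projection deleting coordinate i
  set π : E → (Fin m → ℝ) := fun x j => x (i.succAbove j) with hπ
  have hπlip : LipschitzWith 1 π := by
    apply LipschitzWith.of_dist_le_mul
    intro x y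
    rw [NNReal.coe_one, one_mul, dist_pi_le_iff dist_nonneg]
    intro j
    rw [Real.dist_eq, hπ]
    have : x (i.succAbove j) - y (i.succAbove j) = (x - y) (i.succAbove j) := rfl
    rw [show dist x y = ‖x - y‖ from dist_eq_norm x y]
    calc |x (i.succAbove j) - y (i.succAbove j)| = |(x - y) (i.succAbove j)| := by rw [this]
      _ ≤ ‖x - y‖ := abs_coord_le_norm _ _
  -- the graph map
  set G : (Fin m → ℝ) → E := fun y =>
    (WithLp.equiv 2 (Fin (m+1) → ℝ)).symm
      (i.insertNth (σ * Real.sqrt (1 - ∑ j, (y j) ^ 2)) y) with hG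
  have hGcoord_same : ∀ y, G y i = σ * Real.sqrt (1 - ∑ j, (y j) ^ 2) := by
    intro y
    simp [hG, WithLp.equiv_symm_apply, PiLp.toLp_apply, Fin.insertNth_apply_same]
  have hGcoord_above : ∀ y j, G y (i.succAbove j) = y j := by
    intro y j
    simp [hG, WithLp.equiv_symm_apply, PiLp.toLp_apply, Fin.insertNth_apply_succAbove]
  have hGcont : Continuous G := by
    have h1 : Continuous fun y : Fin m → ℝ =>
        (i.insertNth (σ * Real.sqrt (1 - ∑ j, (y j) ^ 2)) y : Fin (m+1) → ℝ) := by
      apply continuous_pi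
      intro k
      by_cases hk : k = i
      · subst hk
        simp only [Fin.insertNth_apply_same]
        exact continuous_const.mul (Real.continuous_sqrt.comp
          (continuous_const.sub (continuous_finset_sum _ fun j _ => (continuous_apply j).pow 2)))
      · obtain ⟨j, rfl⟩ := Fin.exists_succAbove_eq hk
        simp only [Fin.insertNth_apply_succAbove]
        exact continuous_apply j
    exact (lipschitz_equiv_symm (m+1)).continuous.comp h1
  have hGsphere : ∀ y : Fin m → ℝ, (∑ j, (y j) ^ 2) ≤ 1 → G y ∈ sphere (0:E) 1 := by
    intro y hy
    rw [mem_sphere_zero_iff_norm, EuclideanSpace.norm_eq]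
    have hsum : ∑ k, ‖G y k‖ ^ 2 = 1 := by
      rw [Fin.sum_univ_succAbove (fun k => ‖G y k‖ ^ 2) i]
      simp only [hGcoord_same, hGcoord_above, Real.norm_eq_abs, sq_abs]
      rw [mul_pow, hσsq, one_mul, Real.sq_sqrt (by linarith)]
      ring
    rw [hsum, Real.sqrt_one]
  have hπG : ∀ y, π (G y) = y := by
    intro y; funext j
    exact hGcoord_above y j
  have hGx₀ : G (π x₀) = x₀ := by
    ext k
    by_cases hk : k = i
    · subst hk
      rw [hGcoord_same]
      have hrest : 1 - ∑ j, (π x₀ j) ^ 2 = (x₀ k) ^ 2 := by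
        have h := hsum1
        rw [Fin.sum_univ_succAbove (fun k' => (x₀ k') ^ 2) k] at h
        simp only [hπ]
        linarith
      rw [hrest, Real.sqrt_sq_eq_abs, hσabs]
    · obtain ⟨j, rfl⟩ := Fin.exists_succAbove_eq hk
      exact hGcoord_above _ j
  obtain ⟨W, hWopen, hWeq⟩ := isOpen_induced_iff.mp hU
  have hval : (Subtype.val '' U : Set E) = W ∩ (sphere (0:E) 1) := by
    rw [← hWeq, Subtype.image_preimage_coe]
    exact Set.inter_comm _ _
  set V : Set (Fin m → ℝ) := G ⁻¹' W ∩ {y | ∑ j, (y j) ^ 2 < 1} with hV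
  have hVopen : IsOpen V := (hWopen.preimage hGcont).inter
    (isOpen_lt (continuous_finset_sum _ fun j _ => (continuous_apply j).pow 2) continuous_const)
  have hx₀W : x₀ ∈ W := by
    have hmem : x₀ ∈ Subtype.val '' U := ⟨u₀, hu₀, rfl⟩
    rw [hval] at hmem; exact hmem.1
  have hy₀V : π x₀ ∈ V := by
    constructor
    · rw [Set.mem_preimage, hGx₀]; exact hx₀W
    · show ∑ j, (π x₀ j) ^ 2 < 1
      have h := hsum1
      rw [Fin.sum_univ_succAbove (fun k' => (x₀ k') ^ 2) i] at h
      have hxi : 0 < (x₀ i) ^ 2 :=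
        lt_of_le_of_ne (sq_nonneg _) (Ne.symm (pow_ne_zero 2 hi))
      simp only [hπ]
      linarith
  have hVsub : V ⊆ π '' (Subtype.val '' U) := by
    intro y hyV
    refine ⟨G y, ?_, hπG y⟩
    rw [hval]
    exact ⟨hyV.1, hGsphere y (le_of_lt hyV.2)⟩
  have hμpi : (μH[(m:ℝ)] : Measure (Fin m → ℝ)) = volume := by
    simpa using (hausdorffMeasure_pi_real (ι := Fin m))
  have hVpos : 0 < μH[(m:ℝ)] V := by
    rw [hμpi]
    exact hVopen.measure_pos volume ⟨π x₀, hy₀V⟩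
  have hchain : μH[(m:ℝ)] V ≤ μH[(m:ℝ)] (Subtype.val '' U) := by
    calc μH[(m:ℝ)] V ≤ μH[(m:ℝ)] (π '' (Subtype.val '' U)) := measure_mono hVsub
      _ ≤ (1:ℝ≥0∞) ^ (m:ℝ) * μH[(m:ℝ)] (Subtype.val '' U) := by
          simpa using hπlip.hausdorffMeasure_image_le hd (Subtype.val '' U)
      _ = μH[(m:ℝ)] (Subtype.val '' U) := by rw [ENNReal.one_rpow, one_mul]
  exact lt_of_lt_of_le hVpos hchain

lemma key_ineq (φ : ℝ → ℝ) (hφconv : StrictConvexOn ℝ (Ioi 0) φ)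
    {a b : ℝ} (ha : 0 < a) (hb : 0 < b) (hab : a ≠ b) :
    φ 1 * a + φ 1 * b < φ (b / a) * a + φ (a / b) * b := by
  have hx : (b / a) ∈ Ioi (0:ℝ) := div_pos hb ha
  have hy : (a / b) ∈ Ioi (0:ℝ) := div_pos ha hb
  have hxy : b / a ≠ a / b := by
    intro h
    rw [div_eq_div_iff ha.ne' hb.ne'] at h
    rcases mul_self_eq_mul_self_iff.mp h with h' | h'
    · exact hab h'.symm
    · linarith
  have habpos : (0:ℝ) < a + b := by linarith
  have hw1 : (0:ℝ) < a / (a + b) := div_pos ha habpos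
  have hw2 : (0:ℝ) < b / (a + b) := div_pos hb habpos
  have hsum : a / (a + b) + b / (a + b) = 1 := by field_simp
  have h := hφconv.2 hx hy hxy hw1 hw2 hsum
  simp only [smul_eq_mul] at h
  have hcomb : a / (a + b) * (b / a) + b / (a + b) * (a / b) = 1 := by
    field_simp
    ring
  rw [hcomb] at h
  have h2 := mul_lt_mul_of_pos_left h habpos
  have h3 : (a + b) * (a / (a + b) * φ (b / a) + b / (a + b) * φ (a / b))
      = φ (b / a) * a + φ (a / b) * b := by
    field_simp
  rw [h3] at h2
  have h4 : (a + b) * φ 1 = φ 1 * a + φ 1 * b := by ring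
  linarith

/-- Uniqueness theorem: if a class `M` of star bodies (given by radial functions)
contains `K₁` and `L₁` and `Ṽ_φ(Q,K₁,K₂,...,Kₙ) = Ṽ_φ(Q,L₁,K₂,...,Kₙ)` for all
`Q ∈ M`, where `φ` is strictly convex and strictly decreasing, then `K₁ = L₁`. -/
theorem orlicz_multiple_dual_mixed_volume_unique
    (n : ℕ) (hn : 0 < n)
    (φ : ℝ → ℝ)
    (hφconv : StrictConvexOn ℝ (Ioi 0) φ)
    (hφanti : StrictAntiOn φ (Ioi 0))
    (hφpos : ∀ t ∈ Ioi (0 : ℝ), 0 < φ t)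
    (M : Set (sphere (0 : EuclideanSpace ℝ (Fin n)) 1 → ℝ))
    (hM : ∀ Q ∈ M, Continuous Q ∧ ∀ u, 0 < Q u)
    (ρK ρL : sphere (0 : EuclideanSpace ℝ (Fin n)) 1 → ℝ)
    (hKM : ρK ∈ M) (hLM : ρL ∈ M)
    (ρ : ℕ → (sphere (0 : EuclideanSpace ℝ (Fin n)) 1 → ℝ))
    (hc : ∀ i, 2 ≤ i → i ≤ n → Continuous (ρ i))
    (hpos : ∀ i, 2 ≤ i → i ≤ n → ∀ u, 0 < ρ i u)
    (heq : ∀ Q ∈ M, VOrlicz n φ Q ρK ρ = VOrlicz n φ Q ρL ρ) :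
    ρK = ρL := by
  obtain ⟨m, rfl⟩ : ∃ m, n = m + 1 := ⟨n - 1, (Nat.succ_pred_eq_of_pos hn).symm⟩
  have hμeq : sphereσ (m+1) = μH[(m:ℝ)] := by
    rw [sphereσ]
    norm_num
  haveI hfin : IsFiniteMeasure (sphereσ (m+1)) := by
    constructor
    rw [hμeq]
    exact sphere_hausdorff_lt_top m
  haveI hopos : (sphereσ (m+1)).IsOpenPosMeasure := by
    constructor
    intro U hUopen hUne
    rw [hμeq]
    exact (sphere_hausdorff_open_pos m U hUopen hUne).ne'
  obtain ⟨hKc, hKpos⟩ := hM _ hKM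
  obtain ⟨hLc, hLpos⟩ := hM _ hLM
  set μ := sphereσ (m+1) with hμ
  set P : sphere (0 : EuclideanSpace ℝ (Fin (m+1))) 1 → ℝ := fun u => ∏ j ∈ Finset.Icc 2 (m+1), ρ j u with hP
  have hPc : Continuous P := by
    apply continuous_finset_prod
    intro j hj
    rw [Finset.mem_Icc] at hj
    exact hc j hj.1 hj.2
  have hPpos : ∀ u, 0 < P u := by
    intro u
    apply Finset.prod_pos
    intro j hj
    rw [Finset.mem_Icc] at hj
    exact hpos j hj.1 hj.2 u
  have hφcont : ContinuousOn φ (Ioi 0) := hφconv.convexOn.continuousOn isOpen_Ioi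
  have hratioKL : Continuous fun u => φ (ρL u / ρK u) :=
    hφcont.comp_continuous (hLc.div hKc fun u => (hKpos u).ne')
      (fun u => div_pos (hLpos u) (hKpos u))
  have hratioLK : Continuous fun u => φ (ρK u / ρL u) :=
    hφcont.comp_continuous (hKc.div hLc fun u => (hLpos u).ne')
      (fun u => div_pos (hKpos u) (hLpos u))
  have integ : ∀ (f : sphere (0 : EuclideanSpace ℝ (Fin (m+1))) 1 → ℝ),
      Continuous f → Integrable f μ := by
    intro f hf
    apply hf.integrable_of_hasCompactSupport
    exact IsCompact.of_isClosed_subset isCompact_univ (isClosed_tsupport f) (Set.subset_univ _)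
  have hfac : (1 / ((m+1:ℕ):ℝ)) ≠ 0 :=
    one_div_ne_zero (Nat.cast_ne_zero.mpr (Nat.succ_ne_zero m))
  have hA := heq ρK hKM
  have hB := heq ρL hLM
  simp only [VOrlicz] at hA hB
  replace hA := mul_left_cancel₀ (by exact_mod_cast hfac) hA
  replace hB := mul_left_cancel₀ (by exact_mod_cast hfac) hB
  have hA' : ∫ u, φ (ρK u / ρK u) * (ρK u * P u) ∂μ
      = ∫ u, φ (ρL u / ρK u) * (ρK u * P u) ∂μ := hA
  have hB' : ∫ u, φ (ρK u / ρL u) * (ρL u * P u) ∂μ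
      = ∫ u, φ (ρL u / ρL u) * (ρL u * P u) ∂μ := hB
  have e1 : (fun u => φ (ρK u / ρK u) * (ρK u * P u)) = fun u => φ 1 * (ρK u * P u) :=
    funext fun u => by rw [div_self (hKpos u).ne']
  have e4 : (fun u => φ (ρL u / ρL u) * (ρL u * P u)) = fun u => φ 1 * (ρL u * P u) :=
    funext fun u => by rw [div_self (hLpos u).ne']
  rw [e1] at hA'
  rw [e4] at hB'
  have if1 : Integrable (fun u => φ 1 * (ρK u * P u)) μ :=
    integ _ (continuous_const.mul (hKc.mul hPc))
  have if4 : Integrable (fun u => φ 1 * (ρL u * P u)) μ :=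
    integ _ (continuous_const.mul (hLc.mul hPc))
  have if2 : Integrable (fun u => φ (ρL u / ρK u) * (ρK u * P u)) μ :=
    integ _ (hratioKL.mul (hKc.mul hPc))
  have if3 : Integrable (fun u => φ (ρK u / ρL u) * (ρL u * P u)) μ :=
    integ _ (hratioLK.mul (hLc.mul hPc))
  set g : sphere (0 : EuclideanSpace ℝ (Fin (m+1))) 1 → ℝ := fun u => φ (ρL u / ρK u) * (ρK u * P u) + φ (ρK u / ρL u) * (ρL u * P u)
    - (φ 1 * (ρK u * P u) + φ 1 * (ρL u * P u)) with hg
  have hgcont : Continuous g :=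
    ((hratioKL.mul (hKc.mul hPc)).add (hratioLK.mul (hLc.mul hPc))).sub
      ((continuous_const.mul (hKc.mul hPc)).add (continuous_const.mul (hLc.mul hPc)))
  have hgint : Integrable g μ := ((if2.add if3).sub (if1.add if4))
  have hzero : ∫ u, g u ∂μ = 0 := by
    have hs1 : Integrable (fun u => φ (ρL u / ρK u) * (ρK u * P u)
        + φ (ρK u / ρL u) * (ρL u * P u)) μ := if2.add if3
    have hs2 : Integrable (fun u => φ 1 * (ρK u * P u) + φ 1 * (ρL u * P u)) μ := if1.add if4
    simp only [hg]
    rw [integral_sub hs1 hs2, integral_add if2 if3, integral_add if1 if4]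
    rw [← hA', hB']
    ring
  have hnonneg : ∀ u, 0 ≤ g u := by
    intro u
    rw [hg]
    simp only
    rcases eq_or_ne (ρK u) (ρL u) with h | h
    · rw [h, div_self (hLpos u).ne']
      ring_nf
      exact le_refl _
    · have hk := key_ineq φ hφconv (hKpos u) (hLpos u) h
      have hp := hPpos u
      nlinarith [mul_lt_mul_of_pos_right hk hp]
  have hgavg : g =ᵐ[μ] 0 :=
    (integral_eq_zero_iff_of_nonneg hnonneg hgint).mp hzero
  have hg0 : g = 0 := ((hgcont.ae_eq_iff_eq μ continuous_const).mp hgavg)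
  funext u
  by_contra hne
  have hgu : g u = 0 := by rw [hg0]; rfl
  have hk := key_ineq φ hφconv (hKpos u) (hLpos u) hne
  have hp := hPpos u
  rw [hg] at hgu
  simp only at hgu
  nlinarith [mul_lt_mul_of_pos_right hk hp]
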